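/- arXiv:1608.00760 — 3 statements merged into one kernel-verified Lean document; each statement's English description precedes it below -/
import Mathlib

section
/- Let u > 0 and A ∈ ℝ with cos(2A) < 1 and 1 + cos(2A) > 0, and define p(x) = x² - u·x + u·cos(2A) - 1. Then p has exactly one root in the open interval (-1, cos(2A)) and its other root is strictly greater than 1. -/
open Real

/-- For `u > 0` and `A` with `cos(2A) < 1` and `1 + cos(2A) > 0`, the quadratic
`p(x) = x² - ux + u cos(2A) - 1` has exactly one root in `(-1, cos(2A))`, and its
other root is `> 1`. -/
theorem stmt_8 (u A : ℝ) (hu : 0 < u) (h1 : Real.cos (2 * A) < 1)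
    (h2 : 1 + Real.cos (2 * A) > 0) :
    ∃ x y : ℝ, x ∈ Set.Ioo (-1 : ℝ) (Real.cos (2 * A)) ∧ 1 < y ∧
      (∀ z : ℝ, z ^ 2 - u * z + u * Real.cos (2 * A) - 1 = 0 ↔ z = x ∨ z = y) := by
  set c := Real.cos (2 * A) with hc
  have hc2 : -1 < c := by linarith
  set D : ℝ := u ^ 2 - 4 * u * c + 4 with hD
  have hDpos : 0 < D := by nlinarith [sq_nonneg (u - 2)]
  set d : ℝ := Real.sqrt D with hd
  have hd0 : 0 ≤ d := Real.sqrt_nonneg _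
  have hd2 : d ^ 2 = D := Real.sq_sqrt hDpos.le
  refine ⟨(u - d) / 2, (u + d) / 2, ⟨?_, ?_⟩, ?_, ?_⟩
  · -- -1 < x : need d < u + 2, i.e. d² < (u+2)²
    have : d < u + 2 := by nlinarith
    linarith
  · -- x < c : need u - 2c < d, i.e. (u-2c)² < d²
    have : u - 2 * c < d := by nlinarith [sq_nonneg (u - 2 * c)]
    linarith
  · -- 1 < y : need 2 - u < d
    have : 2 - u < d := by nlinarith [sq_nonneg (2 - u)]
    linarith
  · intro z
    have hfac : z ^ 2 - u * z + u * c - 1 = (z - (u - d) / 2) * (z - (u + d) / 2) := by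
      have : d ^ 2 = u ^ 2 - 4 * u * c + 4 := hd2
      nlinarith [this]
    rw [hfac, mul_eq_zero]
    constructor
    · rintro (h | h) <;> [left; right] <;> linarith
    · rintro (h | h) <;> [left; right] <;> simp [h]
end

section
/- Let λ₁, λ₂ be the roots of P(λ) = λ² - (α+β)λ + (αβ-γ) with αβ - γ ≠ 0, and set ρ₁ = |α+β|, ρ₂ = |αβ-γ|, θ₁ = Arg(α+β), θ₂ = Arg(αβ-γ), A = θ₁ - θ₂/2, B = (1/2)·arccos((1/2)(ρ₁²/(2ρ₂) - sqrt(ρ₁⁴/(4ρ₂²) + 4 - 2(ρ₁²/ρ₂)cos(2A)))). If cos(A) ≥ 0, then the principal arguments of λ₁, λ₂ are θ₂/2 + B and θ₂/2 - B. -/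
open Complex Real

set_option maxHeartbeats 2000000 in
/-- Lemma 1(a): with `λ₁, λ₂` the roots of `λ² - (α+β)λ + (αβ-γ)`, `αβ-γ ≠ 0`,
`ρ₁ = |α+β|`, `ρ₂ = |αβ-γ|`, `θ₁ = Arg(α+β)`, `θ₂ = Arg(αβ-γ)`, `A = θ₁ - θ₂/2`,
`B = (1/2) arccos((1/2)(ρ₁²/(2ρ₂) - √(ρ₁⁴/(4ρ₂²) + 4 - 2(ρ₁²/ρ₂)cos 2A)))`,
if `cos A ≥ 0` then the principal arguments of `λ₁, λ₂` are `θ₂/2 + B` and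
`θ₂/2 - B`. -/
theorem stmt_11 (α β γ lam₁ lam₂ : ℂ) (hne : α * β - γ ≠ 0)
    (hroots : ∀ lam : ℂ, lam ^ 2 - (α + β) * lam + (α * β - γ)
      = (lam - lam₁) * (lam - lam₂))
    (ρ₁ ρ₂ θ₁ θ₂ A B : ℝ)
    (hρ₁ : ρ₁ = ‖α + β‖) (hρ₂ : ρ₂ = ‖α * β - γ‖)
    (hθ₁ : θ₁ = (α + β).arg) (hθ₂ : θ₂ = (α * β - γ).arg)
    (hA : A = θ₁ - θ₂ / 2)
    (hB : B = (1 / 2) * Real.arccos ((1 / 2) * (ρ₁ ^ 2 / (2 * ρ₂) -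
      Real.sqrt (ρ₁ ^ 4 / (4 * ρ₂ ^ 2) + 4 - 2 * (ρ₁ ^ 2 / ρ₂) * Real.cos (2 * A)))))
    (hcos : Real.cos A ≥ 0) :
    (lam₁.arg = θ₂ / 2 + B ∧ lam₂.arg = θ₂ / 2 - B) ∨
    (lam₁.arg = θ₂ / 2 - B ∧ lam₂.arg = θ₂ / 2 + B) := by
  have hπ : (0:ℝ) < π := Real.pi_pos
  have hexp : ∀ x y : ℝ, Complex.exp ((x:ℂ) * Complex.I) * Complex.exp ((y:ℂ) * Complex.I)
      = Complex.exp (((x + y : ℝ) : ℂ) * Complex.I) := by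
    intro x y; rw [← Complex.exp_add]; congr 1; push_cast; ring
  have hE : ∀ x : ℝ, Complex.exp ((x:ℂ) * Complex.I)
      = (Real.cos x : ℂ) + (Real.sin x : ℂ) * Complex.I := by
    intro x
    rw [Complex.exp_mul_I, ← Complex.ofReal_cos, ← Complex.ofReal_sin]
  -- coefficients
  have hprod : α * β - γ = lam₁ * lam₂ := by linear_combination hroots 0
  have hl12 : lam₁ * lam₂ ≠ 0 := hprod ▸ hne
  have hl1 : lam₁ ≠ 0 := left_ne_zero_of_mul hl12
  have hl2 : lam₂ ≠ 0 := right_ne_zero_of_mul hl12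
  have hsum : α + β = lam₁ + lam₂ := by
    refine mul_right_cancel₀ hl1 ?_
    linear_combination hprod - hroots lam₁
  -- ranges and polar forms
  have hθ₂lt : -π < θ₂ := hθ₂ ▸ Complex.neg_pi_lt_arg _
  have hθ₂le : θ₂ ≤ π := hθ₂ ▸ Complex.arg_le_pi _
  have hρ₂pos : 0 < ρ₂ := by rw [hρ₂]; exact norm_pos_iff.mpr hne
  have hρ₁nonneg : 0 ≤ ρ₁ := by rw [hρ₁]; exact norm_nonneg _
  have hpe : lam₁ * lam₂ = (ρ₂ : ℂ) * Complex.exp ((θ₂:ℂ) * Complex.I) := by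
    rw [← hprod, hρ₂, hθ₂]; exact (Complex.norm_mul_exp_arg_mul_I _).symm
  have hse : lam₁ + lam₂ = (ρ₁ : ℂ) * Complex.exp ((θ₁:ℂ) * Complex.I) := by
    rw [← hsum, hρ₁, hθ₁]; exact (Complex.norm_mul_exp_arg_mul_I _).symm
  -- rotated roots
  set μ₁ : ℂ := lam₁ * Complex.exp (-(θ₂/2 : ℝ) * Complex.I) with hμ₁def
  set μ₂ : ℂ := lam₂ * Complex.exp (-(θ₂/2 : ℝ) * Complex.I) with hμ₂def
  have hμprod : μ₁ * μ₂ = (ρ₂ : ℂ) := by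
    rw [hμ₁def, hμ₂def]
    have h1 : lam₁ * Complex.exp (-(θ₂/2 : ℝ) * Complex.I) *
        (lam₂ * Complex.exp (-(θ₂/2 : ℝ) * Complex.I)) =
        (lam₁ * lam₂) * (Complex.exp (((-(θ₂/2) : ℝ):ℂ) * Complex.I) *
          Complex.exp (((-(θ₂/2) : ℝ):ℂ) * Complex.I)) := by push_cast; ring
    rw [h1, hexp, hpe, mul_assoc, hexp,
      show (θ₂ + (-(θ₂/2) + -(θ₂/2)) : ℝ) = 0 from by ring,
      Complex.ofReal_zero, zero_mul, Complex.exp_zero, mul_one]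
  have hμ₁ne : μ₁ ≠ 0 := by
    rw [hμ₁def]; exact mul_ne_zero hl1 (Complex.exp_ne_zero _)
  have hμ₂ne : μ₂ ≠ 0 := by
    rw [hμ₂def]; exact mul_ne_zero hl2 (Complex.exp_ne_zero _)
  set r₁ : ℝ := ‖μ₁‖ with hr₁def
  set r₂ : ℝ := ‖μ₂‖ with hr₂def
  set φ : ℝ := μ₁.arg with hφdef
  have hr₁pos : 0 < r₁ := norm_pos_iff.mpr hμ₁ne
  have hr₂pos : 0 < r₂ := norm_pos_iff.mpr hμ₂ne
  have hr : r₁ * r₂ = ρ₂ := by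
    have := congrArg (‖·‖) hμprod
    simpa [norm_mul, Complex.norm_real, Real.norm_eq_abs, abs_of_pos hρ₂pos] using this
  have hφlt : -π < φ := Complex.neg_pi_lt_arg _
  have hφle' : φ ≤ π := Complex.arg_le_pi _
  have hμ₁e : μ₁ = (r₁ : ℂ) * Complex.exp ((φ : ℝ) * Complex.I) :=
    (Complex.norm_mul_exp_arg_mul_I μ₁).symm
  have hμ₂e : μ₂ = (r₂ : ℂ) * Complex.exp (((-φ : ℝ):ℂ) * Complex.I) := by
    refine mul_right_cancel₀ hμ₁ne ?_
    rw [mul_comm μ₂ μ₁, hμprod, hμ₁e]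
    rw [show (r₂ : ℂ) * Complex.exp (((-φ:ℝ):ℂ) * Complex.I) *
        ((r₁:ℂ) * Complex.exp (((φ:ℝ):ℂ) * Complex.I)) =
        ((r₂:ℂ) * r₁) * (Complex.exp (((-φ:ℝ):ℂ) * Complex.I) *
          Complex.exp (((φ:ℝ):ℂ) * Complex.I)) from by ring,
      hexp, show (-φ + φ : ℝ) = 0 from by ring,
      Complex.ofReal_zero, zero_mul, Complex.exp_zero, mul_one, ← hr]
    push_cast; ring
  -- the sum of the rotated roots
  have heq : (r₁ : ℂ) * Complex.exp ((φ:ℝ) * Complex.I) +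
      (r₂ : ℂ) * Complex.exp (((-φ:ℝ):ℂ) * Complex.I) =
      (ρ₁ : ℂ) * Complex.exp ((A:ℝ) * Complex.I) := by
    rw [← hμ₁e, ← hμ₂e, hμ₁def, hμ₂def]
    have h1 : lam₁ * Complex.exp (-(θ₂/2 : ℝ) * Complex.I) +
        lam₂ * Complex.exp (-(θ₂/2 : ℝ) * Complex.I) =
        (lam₁ + lam₂) * Complex.exp (((-(θ₂/2) : ℝ):ℂ) * Complex.I) := by push_cast; ring
    rw [h1, hse, mul_assoc, hexp, hA,
      show (θ₁ + -(θ₂/2) : ℝ) = θ₁ - θ₂/2 from by ring]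
  rw [hE, hE, hE, Real.cos_neg, Real.sin_neg] at heq
  have hre : (r₁ + r₂) * Real.cos φ = ρ₁ * Real.cos A := by
    have := congrArg Complex.re heq
    simp [Complex.add_re, Complex.mul_re, Complex.cos_ofReal_re,
      Complex.sin_ofReal_re] at this
    linarith [this]
  have him : (r₁ - r₂) * Real.sin φ = ρ₁ * Real.sin A := by
    have := congrArg Complex.im heq
    simp [Complex.add_im, Complex.mul_im, Complex.cos_ofReal_re,
      Complex.sin_ofReal_re] at this
    linarith [this]
  set c : ℝ := Real.cos φ with hcdef
  set s : ℝ := Real.sin φ with hsdef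
  set cA : ℝ := Real.cos A with hcAdef
  set sA : ℝ := Real.sin A with hsAdef
  have h1 : c^2 + s^2 = 1 := by
    rw [hcdef, hsdef, add_comm]; exact Real.sin_sq_add_cos_sq φ
  have h2 : cA^2 + sA^2 = 1 := by
    rw [hcAdef, hsAdef, add_comm]; exact Real.sin_sq_add_cos_sq A
  have E1 : ρ₁^2 = (r₁^2 + r₂^2) + 2*ρ₂*(2*c^2 - 1) := by
    linear_combination (-((r₁+r₂)*c + ρ₁*cA)) * hre + (-((r₁-r₂)*s + ρ₁*sA)) * him +
      (-(ρ₁^2)) * h2 + (r₁^2 + r₂^2 - 2*ρ₂) * h1 + (2*(c^2 - s^2)) * hr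
  have E2 : ρ₁^2 * Real.cos (2*A) = (r₁^2 + r₂^2)*(2*c^2 - 1) + 2*ρ₂ := by
    rw [show Real.cos (2*A) = cA^2 - sA^2 from by
      rw [hcAdef, hsAdef]; rw [Real.cos_two_mul]; nlinarith [Real.sin_sq_add_cos_sq A]]
    linear_combination (-((r₁+r₂)*c + ρ₁*cA)) * hre + ((r₁-r₂)*s + ρ₁*sA) * him +
      (2*ρ₂ - (r₁^2 + r₂^2)) * h1 + (2*(c^2 + s^2)) * hr
  -- evaluate the square root
  have hWnn : 0 ≤ (r₁^2 + r₂^2 - 2*ρ₂*(2*c^2 - 1)) / (2*ρ₂) := by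
    have hid : r₁^2 + r₂^2 - 2*ρ₂*(2*c^2 - 1) = ((r₁-r₂)*c)^2 + ((r₁+r₂)*s)^2 := by
      linear_combination (2*(2*c^2-1))*hr - (r₁^2+r₂^2+2*r₁*r₂)*h1
    have h3 : 0 ≤ r₁^2 + r₂^2 - 2*ρ₂*(2*c^2 - 1) := by
      rw [hid]; positivity
    exact div_nonneg h3 (by linarith)
  have hW : ρ₁ ^ 4 / (4 * ρ₂ ^ 2) + 4 - 2 * (ρ₁ ^ 2 / ρ₂) * Real.cos (2 * A)
      = ((r₁^2 + r₂^2 - 2*ρ₂*(2*c^2 - 1)) / (2*ρ₂))^2 := by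
    have hρ₂ne : ρ₂ ≠ 0 := ne_of_gt hρ₂pos
    have key : ρ₁^4 + 16*ρ₂^2 - 8*ρ₂*(ρ₁^2*Real.cos (2*A))
        = (r₁^2 + r₂^2 - 2*ρ₂*(2*c^2 - 1))^2 := by
      linear_combination (ρ₁^2 + (r₁^2 + r₂^2) + 2*ρ₂*(2*c^2-1)) * E1 - 8*ρ₂ * E2
    have hrw : ρ₁ ^ 4 / (4 * ρ₂ ^ 2) + 4 - 2 * (ρ₁ ^ 2 / ρ₂) * Real.cos (2*A)
        = (ρ₁^4 + 16*ρ₂^2 - 8*ρ₂*(ρ₁^2*Real.cos (2*A))) / (4*ρ₂^2) := by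
      field_simp; ring
    rw [show (2*A : ℝ) = 2*A from rfl, hrw, key, div_pow,
      show ((2*ρ₂)^2 : ℝ) = 4*ρ₂^2 from by ring]
  have hX : (1 / 2) * (ρ₁ ^ 2 / (2 * ρ₂) -
      Real.sqrt (ρ₁ ^ 4 / (4 * ρ₂ ^ 2) + 4 - 2 * (ρ₁ ^ 2 / ρ₂) * Real.cos (2 * A)))
      = 2*c^2 - 1 := by
    rw [hW, Real.sqrt_sq hWnn]
    field_simp
    linear_combination E1
  -- bounds for φ
  have hcpos : 0 ≤ c := by
    by_contra h
    push_neg at h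
    nlinarith [mul_nonneg hρ₁nonneg hcos]
  have hφle : φ ≤ π / 2 := by
    by_contra h
    push_neg at h
    have := Real.cos_neg_of_pi_div_two_lt_of_lt h (by linarith)
    rw [← hcdef] at this; linarith
  have hφge : -(π/2) ≤ φ := by
    by_contra h
    push_neg at h
    have := Real.cos_neg_of_pi_div_two_lt_of_lt (x := -φ) (by linarith) (by linarith)
    rw [Real.cos_neg, ← hcdef] at this; linarith
  -- B = |φ|
  have hk : 2*c^2 - 1 = Real.cos (2*φ) := by rw [Real.cos_two_mul, hcdef]
  -- arguments of the roots
  have harg1 : lam₁.arg = θ₂/2 + φ := by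
    have hlam₁ : lam₁ = (r₁ : ℂ) * Complex.exp (((θ₂/2 + φ : ℝ):ℂ) * Complex.I) := by
      have h0 : lam₁ = μ₁ * Complex.exp (((θ₂/2 : ℝ):ℂ) * Complex.I) := by
        rw [hμ₁def, mul_assoc, ← Complex.exp_add,
          show (-(↑(θ₂/2):ℂ) * Complex.I + (↑(θ₂/2):ℂ) * Complex.I) = 0 from by ring,
          Complex.exp_zero, mul_one]
      rw [h0, hμ₁e, mul_assoc, hexp, show (φ + θ₂/2 : ℝ) = θ₂/2 + φ from by ring]
    rw [hlam₁, Complex.exp_mul_I]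
    exact Complex.arg_mul_cos_add_sin_mul_I hr₁pos ⟨by linarith, by linarith⟩
  have harg2 : lam₂.arg = θ₂/2 - φ := by
    have hlam₂ : lam₂ = (r₂ : ℂ) * Complex.exp (((θ₂/2 - φ : ℝ):ℂ) * Complex.I) := by
      have h0 : lam₂ = μ₂ * Complex.exp (((θ₂/2 : ℝ):ℂ) * Complex.I) := by
        rw [hμ₂def, mul_assoc, ← Complex.exp_add,
          show (-(↑(θ₂/2):ℂ) * Complex.I + (↑(θ₂/2):ℂ) * Complex.I) = 0 from by ring,
          Complex.exp_zero, mul_one]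
      rw [h0, hμ₂e, mul_assoc, hexp, show (-φ + θ₂/2 : ℝ) = θ₂/2 - φ from by ring]
    rw [hlam₂, Complex.exp_mul_I]
    exact Complex.arg_mul_cos_add_sin_mul_I hr₂pos ⟨by linarith, by linarith⟩
  rcases le_or_gt 0 φ with hφ0 | hφ0
  · left
    have hBφ : B = φ := by
      rw [hB, hX, hk, Real.arccos_cos (by linarith) (by linarith)]; ring
    exact ⟨by rw [harg1, hBφ], by rw [harg2, hBφ]⟩
  · right
    have hBφ : B = -φ := by
      rw [hB, hX, hk, show (2*φ : ℝ) = -(2*(-φ)) from by ring, Real.cos_neg,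
        Real.arccos_cos (by linarith) (by linarith)]
      ring
    exact ⟨by rw [harg1, hBφ]; ring, by rw [harg2, hBφ]; ring⟩
end

section
/- Under the notation of Lemma 1 (λ₁, λ₂ roots of λ² - (α+β)λ + (αβ-γ), ρ₁, ρ₂, θ₁, θ₂, A = θ₁ - θ₂/2, B as defined), if cos(A) < 0 and θ₂ ∈ (-2B, 2B], then the principal arguments of λ₁, λ₂ are θ₂/2 + (π - B) and θ₂/2 - (π - B). -/
open Complex Real


set_option maxHeartbeats 1000000 in
/-- Lemma 1(b.2): with `λ₁, λ₂` the roots of `λ² - (α+β)λ + (αβ-γ)`, `αβ-γ ≠ 0`,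
`ρ₁ = |α+β|`, `ρ₂ = |αβ-γ|`, `θ₁ = Arg(α+β)`, `θ₂ = Arg(αβ-γ)`, `A = θ₁ - θ₂/2`,
`B = (1/2) arccos((1/2)(ρ₁²/(2ρ₂) - √(ρ₁⁴/(4ρ₂²) + 4 - 2(ρ₁²/ρ₂)cos 2A)))`,
if `cos A < 0` and `θ₂ ∈ (-2B, 2B]` then the principal arguments of `λ₁, λ₂` are
`θ₂/2 + (π-B)` and `θ₂/2 - (π-B)`. -/
theorem stmt_12 (α β γ lam₁ lam₂ : ℂ) (hne : α * β - γ ≠ 0)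
    (hroots : ∀ lam : ℂ, lam ^ 2 - (α + β) * lam + (α * β - γ)
      = (lam - lam₁) * (lam - lam₂))
    (ρ₁ ρ₂ θ₁ θ₂ A B : ℝ)
    (hρ₁ : ρ₁ = ‖α + β‖) (hρ₂ : ρ₂ = ‖α * β - γ‖)
    (hθ₁ : θ₁ = (α + β).arg) (hθ₂ : θ₂ = (α * β - γ).arg)
    (hA : A = θ₁ - θ₂ / 2)
    (hB : B = (1 / 2) * Real.arccos ((1 / 2) * (ρ₁ ^ 2 / (2 * ρ₂) -
      Real.sqrt (ρ₁ ^ 4 / (4 * ρ₂ ^ 2) + 4 - 2 * (ρ₁ ^ 2 / ρ₂) * Real.cos (2 * A)))))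
    (hcos : Real.cos A < 0) (hθ : θ₂ ∈ Set.Ioc (-(2 * B)) (2 * B)) :
    (lam₁.arg = θ₂ / 2 + (π - B) ∧ lam₂.arg = θ₂ / 2 - (π - B)) ∨
    (lam₁.arg = θ₂ / 2 - (π - B) ∧ lam₂.arg = θ₂ / 2 + (π - B)) := by
  have hπ : (0:ℝ) < π := Real.pi_pos
  -- Vieta
  have h0 := hroots 0
  have h1 := hroots 1
  have hprod : lam₁ * lam₂ = α * β - γ := by linear_combination -h0
  have hsum : lam₁ + lam₂ = α + β := by linear_combination h1 - h0
  have hρ₂pos : 0 < ρ₂ := by rw [hρ₂]; exact norm_pos_iff.mpr hne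
  set sq2 : ℝ := Real.sqrt ρ₂ with hsq2
  have hsq2pos : 0 < sq2 := Real.sqrt_pos.mpr hρ₂pos
  have hsq2sq : sq2 ^ 2 = ρ₂ := Real.sq_sqrt hρ₂pos.le
  set k : ℝ := ρ₁ / sq2 with hk
  have hρ₁nn : 0 ≤ ρ₁ := by rw [hρ₁]; exact norm_nonneg _
  have hknn : 0 ≤ k := div_nonneg hρ₁nn hsq2pos.le
  have hρ₁k : ρ₁ ^ 2 = k ^ 2 * ρ₂ := by
    rw [hk, div_pow, hsq2sq]; field_simp
  have hk2 : k ^ 2 = ρ₁ ^ 2 / ρ₂ := by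
    rw [hk, div_pow, hsq2sq]
  set w : ℂ := (sq2 : ℂ) * Complex.exp ((θ₂ / 2 : ℝ) * Complex.I) with hwdef
  have hw2 : w ^ 2 = α * β - γ := by
    have hstep : w ^ 2 = ((ρ₂:ℝ) : ℂ) * Complex.exp (((θ₂:ℝ):ℂ) * Complex.I) := by
      rw [hwdef, mul_pow, ← Complex.exp_nat_mul,
        show ((2:ℕ):ℂ) * (((θ₂ / 2 : ℝ):ℂ) * Complex.I) = ((θ₂:ℝ):ℂ) * Complex.I by
          push_cast; ring,
        show ((sq2:ℝ):ℂ) ^ 2 = ((ρ₂:ℝ):ℂ) by rw [← hsq2sq]; push_cast; ring]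
    rw [hstep, hρ₂, hθ₂]
    exact Complex.norm_mul_exp_arg_mul_I _
  have hw0 : w ≠ 0 := by
    apply mul_ne_zero
    · exact_mod_cast hsq2pos.ne'
    · exact Complex.exp_ne_zero _
  set z₁ : ℂ := lam₁ / w with hz₁def
  set z₂ : ℂ := lam₂ / w with hz₂def
  have hlam₁w : lam₁ = z₁ * w := by rw [hz₁def, div_mul_cancel₀ _ hw0]
  have hlam₂w : lam₂ = z₂ * w := by rw [hz₂def, div_mul_cancel₀ _ hw0]
  have hzprod : z₁ * z₂ = 1 := by
    rw [hz₁def, hz₂def, div_mul_div_comm, hprod, ← hw2]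
    field_simp
  have hz₁ne : z₁ ≠ 0 := by
    intro h; rw [h, zero_mul] at hzprod; exact one_ne_zero hzprod.symm
  have hz₂inv : z₂ = z₁⁻¹ := eq_inv_of_mul_eq_one_left (by rw [mul_comm]; exact hzprod)
  have hθ₁A : θ₁ = A + θ₂ / 2 := by rw [hA]; ring
  have hs : (α + β : ℂ) = (ρ₁ : ℝ) * Complex.exp ((θ₁ : ℝ) * Complex.I) := by
    rw [hρ₁, hθ₁]; exact (Complex.norm_mul_exp_arg_mul_I _).symm
  have hzsum : z₁ + z₂ = (k : ℝ) * Complex.exp ((A : ℝ) * Complex.I) := by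
    rw [hz₁def, hz₂def, ← add_div, hsum, hs, hwdef, hk]
    rw [show ((θ₁:ℝ):ℂ) * Complex.I = (A:ℝ) * Complex.I + ((θ₂/2 : ℝ):ℂ) * Complex.I by
      rw [hθ₁A]; push_cast; ring]
    rw [Complex.exp_add]
    have he : Complex.exp (((θ₂/2:ℝ):ℂ) * Complex.I) ≠ 0 := Complex.exp_ne_zero _
    have hsq2ne : ((sq2:ℝ):ℂ) ≠ 0 := by exact_mod_cast hsq2pos.ne'
    field_simp
    push_cast
    field_simp
  set r : ℝ := ‖z₁‖ with hrdef
  set ψ : ℝ := z₁.arg with hψdef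
  have hrpos : 0 < r := norm_pos_iff.mpr hz₁ne
  have hz1eq : z₁ = (r : ℝ) * Complex.exp ((ψ : ℝ) * Complex.I) :=
    (Complex.norm_mul_exp_arg_mul_I z₁).symm
  have hinv : z₁⁻¹ = ((r⁻¹ : ℝ) : ℂ) * Complex.exp (((-ψ : ℝ)) * Complex.I) := by
    rw [hz1eq, mul_inv, ← Complex.exp_neg]
    push_cast
    ring_nf
  have heq : (r : ℂ) * Complex.exp ((ψ:ℝ) * Complex.I)
      + ((r⁻¹ : ℝ) : ℂ) * Complex.exp (((-ψ:ℝ)) * Complex.I)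
      = (k : ℂ) * Complex.exp ((A:ℝ) * Complex.I) := by
    rw [← hinv, ← hz1eq, ← hz₂inv]
    exact hzsum
  have hre := congrArg Complex.re heq
  have him := congrArg Complex.im heq
  simp only [Complex.add_re, Complex.add_im, Complex.mul_re, Complex.mul_im,
    Complex.ofReal_re, Complex.ofReal_im, Complex.exp_ofReal_mul_I_re,
    Complex.exp_ofReal_mul_I_im, zero_mul, sub_zero, add_zero, zero_add,
    Real.cos_neg, Real.sin_neg, mul_neg, neg_mul] at hre him
  set c : ℝ := Real.cos ψ with hcdef
  set s' : ℝ := Real.sin ψ with hs'def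
  set cA : ℝ := Real.cos A with hcAdef
  set sA : ℝ := Real.sin A with hsAdef
  have hE1 : (r + r⁻¹) * c = k * cA := by linear_combination hre
  have hE2 : (r - r⁻¹) * s' = k * sA := by linear_combination him
  have hrinv : r * r⁻¹ = 1 := mul_inv_cancel₀ hrpos.ne'
  have hpyth : s' ^ 2 + c ^ 2 = 1 := Real.sin_sq_add_cos_sq ψ
  have hpythA : sA ^ 2 + cA ^ 2 = 1 := Real.sin_sq_add_cos_sq A
  have h1 : (r ^ 2 + 1) * c = k * cA * r := by
    linear_combination r * hE1 - c * hrinv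
  have h2 : (r ^ 2 - 1) * s' = k * sA * r := by
    linear_combination r * hE2 + s' * hrinv
  have hA1 : (r ^ 2 + 1) ^ 2 * c ^ 2 = k ^ 2 * cA ^ 2 * r ^ 2 := by
    linear_combination ((r ^ 2 + 1) * c + k * cA * r) * h1
  have hA2 : (r ^ 2 - 1) ^ 2 * s' ^ 2 = k ^ 2 * sA ^ 2 * r ^ 2 := by
    linear_combination ((r ^ 2 - 1) * s' + k * sA * r) * h2
  have hsumEq : (r ^ 2 + 1) ^ 2 * c ^ 2 + (r ^ 2 - 1) ^ 2 * (1 - c ^ 2) = k ^ 2 * r ^ 2 := by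
    linear_combination hA1 + hA2 + k ^ 2 * r ^ 2 * hpythA - (r ^ 2 - 1) ^ 2 * hpyth
  have hu2 : (r ^ 2 + 1) ^ 2 = (k ^ 2 + 4 - 4 * c ^ 2) * r ^ 2 := by
    linear_combination hsumEq
  have hr2pos : (0:ℝ) < r ^ 2 := by positivity
  have hq : (k ^ 2 + 4 - 4 * c ^ 2) * c ^ 2 = k ^ 2 * cA ^ 2 := by
    have h : (k ^ 2 + 4 - 4 * c ^ 2) * c ^ 2 * r ^ 2 = k ^ 2 * cA ^ 2 * r ^ 2 := by
      linear_combination hA1 - c ^ 2 * hu2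
    exact mul_right_cancel₀ hr2pos.ne' h
  have hcle : 4 * c ^ 2 ≤ k ^ 2 * cA ^ 2 := by
    have hkey : (k ^ 2 * cA ^ 2 - 4 * c ^ 2) * r ^ 2 = (r ^ 2 - 1) ^ 2 * c ^ 2 := by
      linear_combination -hA1
    have hnn : 0 ≤ (k ^ 2 * cA ^ 2 - 4 * c ^ 2) * r ^ 2 := by
      rw [hkey]; positivity
    have := (mul_nonneg_iff_of_pos_right hr2pos).mp hnn
    linarith
  have hcnonpos : c ≤ 0 := by
    have hrhs : k * cA * r ≤ 0 := by
      have h' : k * cA ≤ 0 := mul_nonpos_of_nonneg_of_nonpos hknn hcos.le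
      exact mul_nonpos_of_nonpos_of_nonneg h' hrpos.le
    by_contra hpos
    push_neg at hpos
    have hgt : 0 < (r ^ 2 + 1) * c := mul_pos (by positivity) hpos
    rw [h1] at hgt
    linarith
  have hcsq1 : c ^ 2 ≤ 1 := Real.cos_sq_le_one ψ
  have hcA1 : cA ^ 2 ≤ 1 := Real.cos_sq_le_one A
  -- the B side
  set D : ℝ := ρ₁ ^ 4 / (4 * ρ₂ ^ 2) + 4 - 2 * (ρ₁ ^ 2 / ρ₂) * Real.cos (2 * A) with hDdef
  have hDk : D = (k ^ 2 / 2 + 2) ^ 2 - 4 * k ^ 2 * cA ^ 2 := by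
    rw [hDdef, Real.cos_two_mul, ← hcAdef, hk2]
    field_simp
    ring
  have hkcA : k ^ 2 * cA ^ 2 ≤ k ^ 2 * 1 := mul_le_mul_of_nonneg_left hcA1 (sq_nonneg k)
  have hDnn : 0 ≤ D := by
    rw [hDk]; linarith [sq_nonneg (k ^ 2 / 2 - 2)]
  set t : ℝ := (1 / 2) * (ρ₁ ^ 2 / (2 * ρ₂) - Real.sqrt D) with htdef
  have htk : t = (1 / 2) * (k ^ 2 / 2 - Real.sqrt D) := by
    rw [htdef, hk2]; ring
  have hsD_le : Real.sqrt D ≤ k ^ 2 / 2 + 2 := by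
    have h : D ≤ (k ^ 2 / 2 + 2) ^ 2 := by
      have h0 : (0:ℝ) ≤ 4 * k ^ 2 * cA ^ 2 := by positivity
      rw [hDk]; linarith
    calc Real.sqrt D ≤ Real.sqrt ((k ^ 2 / 2 + 2) ^ 2) := Real.sqrt_le_sqrt h
      _ = k ^ 2 / 2 + 2 := Real.sqrt_sq (by positivity)
  have hsD_ge : k ^ 2 / 2 - 2 ≤ Real.sqrt D := by
    rcases le_or_gt (k ^ 2 / 2 - 2) 0 with h | h
    · exact h.trans (Real.sqrt_nonneg D)
    · have hle : (k ^ 2 / 2 - 2) ^ 2 ≤ D := by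
        rw [hDk]; linarith [hkcA, sq_nonneg (k ^ 2 / 2 - 2)]
      calc k ^ 2 / 2 - 2 = Real.sqrt ((k ^ 2 / 2 - 2) ^ 2) := (Real.sqrt_sq h.le).symm
        _ ≤ Real.sqrt D := Real.sqrt_le_sqrt hle
  have ht1 : -1 ≤ t := by rw [htk]; linarith
  have ht2 : t ≤ 1 := by rw [htk]; linarith
  have hBt : B = (1 / 2) * Real.arccos t := hB
  have hB0' : 0 ≤ B := by rw [hBt]; linarith [Real.arccos_nonneg t]
  have hBle : B ≤ π / 2 := by
    rw [hBt]; linarith [Real.arccos_le_pi t]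
  have hcos2B : Real.cos (2 * B) = t := by
    rw [hBt, show 2 * ((1/2) * Real.arccos t) = Real.arccos t by ring]
    exact Real.cos_arccos ht1 ht2
  have hcosBnn : 0 ≤ Real.cos B :=
    Real.cos_nonneg_of_mem_Icc ⟨by linarith, hBle⟩
  have hc8 : 8 * c ^ 2 ≤ k ^ 2 + 4 := by
    rcases le_or_gt (k ^ 2) 4 with h | h
    · linarith [hcle, hkcA]
    · linarith [hcsq1]
  have hDeq : D = ((k ^ 2 + 4 - 8 * c ^ 2) / 2) ^ 2 := by
    rw [hDk]; linear_combination 4 * hq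
  have hsqrtD : Real.sqrt D = (k ^ 2 + 4 - 8 * c ^ 2) / 2 := by
    rw [hDeq, Real.sqrt_sq (by linarith)]
  have hcos2Bc : Real.cos (2 * B) = 2 * c ^ 2 - 1 := by
    rw [hcos2B, htk, hsqrtD]; ring
  have hcosB2 : Real.cos B ^ 2 = c ^ 2 := by
    have := Real.cos_two_mul B
    rw [hcos2Bc] at this
    linarith
  have hcosBc : Real.cos B = -c := by
    calc Real.cos B = Real.sqrt (Real.cos B ^ 2) := (Real.sqrt_sq hcosBnn).symm
      _ = Real.sqrt ((-c) ^ 2) := by rw [hcosB2]; ring_nf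
      _ = -c := Real.sqrt_sq (by linarith)
  have hψcos : Real.cos ψ = Real.cos (π - B) := by
    rw [Real.cos_pi_sub, hcosBc, ← hcdef]; ring
  have hB0 : 0 < B := by
    rcases hθ with ⟨hl, hr⟩; linarith
  have hψ_le : ψ ≤ π := Complex.arg_le_pi z₁
  have hψ_gt : -π < ψ := Complex.neg_pi_lt_arg z₁
  have habs : |ψ| = π - B := by
    have hh1 : Real.arccos (Real.cos |ψ|) = |ψ| :=
      Real.arccos_cos (abs_nonneg ψ) (abs_le.mpr ⟨hψ_gt.le, hψ_le⟩)
    have hh2 : Real.arccos (Real.cos (π - B)) = π - B :=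
      Real.arccos_cos (by linarith) (by linarith)
    rw [← hh1, Real.cos_abs, hψcos, hh2]
  have hψcases : ψ = π - B ∨ ψ = -(π - B) := (abs_eq (by linarith)).mp habs
  -- general arg computation
  have hargexp : ∀ (ρ x : ℝ), 0 < ρ → -π < x → x ≤ π →
      (((ρ : ℝ) : ℂ) * Complex.exp ((x : ℝ) * Complex.I)).arg = x := by
    intro ρ x hρ hx1 hx2
    rw [Complex.exp_mul_I]
    exact Complex.arg_mul_cos_add_sin_mul_I hρ ⟨hx1, hx2⟩
  have hlam₁exp : lam₁ = ((r * sq2 : ℝ) : ℂ)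
      * Complex.exp (((θ₂ / 2 + ψ : ℝ)) * Complex.I) := by
    rw [hlam₁w, hz1eq, hwdef]
    rw [show ((θ₂ / 2 + ψ : ℝ) : ℂ) * Complex.I
        = ((θ₂ / 2 : ℝ) : ℂ) * Complex.I + ((ψ : ℝ) : ℂ) * Complex.I by push_cast; ring]
    rw [Complex.exp_add]
    push_cast
    ring
  have hlam₂exp : lam₂ = ((r⁻¹ * sq2 : ℝ) : ℂ)
      * Complex.exp (((θ₂ / 2 - ψ : ℝ)) * Complex.I) := by
    rw [hlam₂w, hz₂inv, hinv, hwdef]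
    rw [show ((θ₂ / 2 - ψ : ℝ) : ℂ) * Complex.I
        = ((θ₂ / 2 : ℝ) : ℂ) * Complex.I + ((-ψ : ℝ) : ℂ) * Complex.I by push_cast; ring]
    rw [Complex.exp_add]
    push_cast
    ring
  have hθl : -(2 * B) < θ₂ := hθ.1
  have hθr : θ₂ ≤ 2 * B := hθ.2
  have hrpos' : 0 < r * sq2 := mul_pos hrpos hsq2pos
  have hrpos'' : 0 < r⁻¹ * sq2 := mul_pos (inv_pos.mpr hrpos) hsq2pos
  rcases hψcases with hψ1 | hψ2
  · left
    constructor
    · rw [hlam₁exp, hargexp _ _ hrpos' (by rw [hψ1]; linarith) (by rw [hψ1]; linarith), hψ1]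
    · rw [hlam₂exp, hargexp _ _ hrpos'' (by rw [hψ1]; linarith) (by rw [hψ1]; linarith), hψ1]
  · right
    constructor
    · rw [hlam₁exp, hargexp _ _ hrpos' (by rw [hψ2]; linarith) (by rw [hψ2]; linarith), hψ2]
      ring
    · rw [hlam₂exp, hargexp _ _ hrpos'' (by rw [hψ2]; linarith) (by rw [hψ2]; linarith), hψ2]
      ring
end
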